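/- Let H be the abelian group ⟨h₁, h₂⟩ ≤ GL_{2t}(F_{q^k}) defined above, acting on the right on lines of F_{q^k}^{2t}. For each i ∈ {1, …, t}, the stabilizer in H of the line spanned by the canonical basis vector e_i equals ⟨α I_{2t}⟩ = ⟨(h₁h₂)^r⟩, a group of order q^k − 1. -/

import Mathlib

/-- An element of a subring of matrices in which every nonzero element is a unit
is zero as soon as one of its rows vanishes. -/
lemma aux_row_zero {t : ℕ} {F : Type*} [Field F] {A : Matrix (Fin t) (Fin t) F}
    (h : A = 0 ∨ IsUnit A) (i : Fin t) (hrow : ∀ j, A i j = 0) : A = 0 := by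
  rcases h with h | h
  · exact h
  · exfalso
    obtain ⟨B, h1⟩ := h.exists_right_inv
    have h2 := congrFun (congrFun h1 i) i
    rw [Matrix.mul_apply] at h2
    simp only [hrow, zero_mul, Finset.sum_const_zero, Matrix.one_apply_eq] at h2
    exact zero_ne_one h2

lemma aux_fromBlocks_pow {t : ℕ} {F : Type*} [Field F]
    (B : Matrix (Fin t) (Fin t) F) (n : ℕ) :
    (Matrix.fromBlocks B 0 0 B) ^ n = Matrix.fromBlocks (B ^ n) 0 0 (B ^ n) := by
  induction n with
  | zero => simp [Matrix.fromBlocks_one]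
  | succ n ih =>
    rw [pow_succ, ih, Matrix.fromBlocks_multiply, pow_succ]
    simp

lemma aux_fromBlocks_smul_one {t : ℕ} {F : Type*} [Field F] (c : F) :
    Matrix.fromBlocks (c • (1 : Matrix (Fin t) (Fin t) F)) 0 0 (c • 1)
      = c • (1 : Matrix (Fin t ⊕ Fin t) (Fin t ⊕ Fin t) F) := by
  ext p q
  rcases p with p | p <;> rcases q with q | q <;>
    simp [Matrix.one_apply, Sum.inl.injEq, Sum.inr.injEq]

set_option maxHeartbeats 2000000 in
theorem stabilizer_of_line (q k t r : ℕ) (hq : 2 ≤ q) (hk : 1 ≤ k) (ht : 1 ≤ t)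
    (hr : r = (q ^ (k * t) - 1) / (q ^ k - 1))
    (hcop : Nat.Coprime r (q ^ k - 1)) (hrr : r * (q ^ k - 1) = q ^ (k * t) - 1)
    (F : Type*) [Field F] [Fintype F] (hF : Fintype.card F = q ^ k)
    (α : F) (hα : orderOf α = q ^ k - 1)
    (C : Matrix (Fin t) (Fin t) F) (hC : orderOf C = r)
    (hfield : ∀ A ∈ Algebra.adjoin F {C}, A = 0 ∨ IsUnit A)
    (h₁ h₂ : Matrix (Fin t ⊕ Fin t) (Fin t ⊕ Fin t) F)
    (hh₁ : h₁ = Matrix.fromBlocks C 1 0 (α • 1))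
    (hh₂ : h₂ = Matrix.fromBlocks (α • 1) (-1) 0 C)
    (i : Fin t) :
    ({A | A ∈ Submonoid.closure {h₁, h₂} ∧
        Submodule.span F {Matrix.vecMul (Pi.single (Sum.inl i) (1 : F)) A}
          = Submodule.span F {Pi.single (Sum.inl i) (1 : F)}}
      = (Submonoid.powers ((h₁ * h₂) ^ r) : Set (Matrix (Fin t ⊕ Fin t) (Fin t ⊕ Fin t) F))) ∧
    (Submonoid.powers ((h₁ * h₂) ^ r)
      = Submonoid.powers (α • (1 : Matrix (Fin t ⊕ Fin t) (Fin t ⊕ Fin t) F))) ∧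
    (Nat.card (Submonoid.powers ((h₁ * h₂) ^ r)) = q ^ k - 1) := by
  have hd1 : 1 ≤ q ^ k - 1 := by
    have h2 : 2 ≤ q ^ k := le_trans hq (Nat.le_self_pow (by omega) q)
    omega
  have hα0 : α ≠ 0 := by
    intro h
    have h1 := pow_orderOf_eq_one α
    rw [hα, h, zero_pow (by omega)] at h1
    exact zero_ne_one h1
  -- injectivity of scalars into matrices, order of scalar matrices
  have hinj : Function.Injective (algebraMap F (Matrix (Fin t ⊕ Fin t) (Fin t ⊕ Fin t) F)) := by
    intro x y hxy
    have := congrFun (congrFun hxy (Sum.inl i)) (Sum.inl i)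
    simpa [Matrix.algebraMap_matrix_apply] using this
  have hsc : ∀ x : F, algebraMap F (Matrix (Fin t ⊕ Fin t) (Fin t ⊕ Fin t) F) x = x • 1 :=
    fun x => Algebra.algebraMap_eq_smul_one x
  have hord : ∀ x : F, orderOf (x • (1 : Matrix (Fin t ⊕ Fin t) (Fin t ⊕ Fin t) F)) = orderOf x := by
    intro x
    rw [← hsc x]
    exact orderOf_injective (algebraMap F (Matrix (Fin t ⊕ Fin t) (Fin t ⊕ Fin t) F)).toMonoidHom
      hinj x
  -- product of the generators
  have hmul : h₁ * h₂ = Matrix.fromBlocks (α • C) 0 0 (α • C) := by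
    rw [hh₁, hh₂, Matrix.fromBlocks_multiply]
    congr 1 <;> simp [Matrix.mul_smul, Matrix.smul_mul]
  have hmul' : h₂ * h₁ = Matrix.fromBlocks (α • C) 0 0 (α • C) := by
    rw [hh₁, hh₂, Matrix.fromBlocks_multiply]
    congr 1 <;> simp [Matrix.mul_smul, Matrix.smul_mul]
  have hcomm : Commute h₁ h₂ := by rw [Commute, SemiconjBy, hmul, hmul']
  -- (h₁ h₂)^r is the scalar matrix α^r • 1
  have hE1 : (h₁ * h₂) ^ r = (α ^ r) • (1 : Matrix (Fin t ⊕ Fin t) (Fin t ⊕ Fin t) F) := by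
    rw [hmul, aux_fromBlocks_pow, smul_pow, ← hC, pow_orderOf_eq_one, aux_fromBlocks_smul_one]
  -- part 2
  have hE2 : Submonoid.powers ((h₁ * h₂) ^ r)
      = Submonoid.powers (α • (1 : Matrix (Fin t ⊕ Fin t) (Fin t ⊕ Fin t) F)) := by
    apply le_antisymm
    · rw [Submonoid.powers_le, hE1]
      refine ⟨r, ?_⟩
      show (α • 1) ^ r = _
      rw [smul_pow, one_pow]
    · rw [Submonoid.powers_le]
      refine ⟨r ^ (Nat.totient (q ^ k - 1) - 1), ?_⟩
      show ((h₁ * h₂) ^ r) ^ (r ^ (Nat.totient (q ^ k - 1) - 1)) = α • 1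
      have hb : (α ^ r • (1 : Matrix (Fin t ⊕ Fin t) (Fin t ⊕ Fin t) F)) = (α • 1) ^ r := by
        rw [smul_pow, one_pow]
      rw [hE1, hb, ← pow_mul]
      have htot : r * r ^ (Nat.totient (q ^ k - 1) - 1) ≡ 1 [MOD (q ^ k - 1)] := by
        have h1 : 1 ≤ Nat.totient (q ^ k - 1) := Nat.totient_pos.mpr (by omega)
        have : r * r ^ (Nat.totient (q ^ k - 1) - 1) = r ^ Nat.totient (q ^ k - 1) := by
          rw [← pow_succ']
          congr 1
          omega
        rw [this]
        exact Nat.ModEq.pow_totient hcop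
      have hαmod : α ^ (r * r ^ (Nat.totient (q ^ k - 1) - 1)) = α ^ 1 := by
        have ho : orderOf (Units.mk0 α hα0) = q ^ k - 1 := by
          rw [← orderOf_units]; exact hα
        have hu : (Units.mk0 α hα0) ^ (r * r ^ (Nat.totient (q ^ k - 1) - 1))
            = (Units.mk0 α hα0) ^ 1 := by
          rw [pow_eq_pow_iff_modEq, ho]
          exact htot
        have := congrArg Units.val hu
        simpa using this
      rw [smul_pow, one_pow, hαmod, pow_one]
  -- α • 1 is in the closure
  have hα1mem : α • (1 : Matrix (Fin t ⊕ Fin t) (Fin t ⊕ Fin t) F)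
      ∈ Submonoid.closure {h₁, h₂} := by
    have h1 : α • (1 : Matrix (Fin t ⊕ Fin t) (Fin t ⊕ Fin t) F)
        ∈ Submonoid.powers ((h₁ * h₂) ^ r) := by
      rw [hE2]; exact ⟨1, pow_one _⟩
    obtain ⟨n, hn⟩ := h1
    have hn' : ((h₁ * h₂) ^ r) ^ n = α • 1 := hn
    rw [← hn']
    exact pow_mem (pow_mem (mul_mem (Submonoid.subset_closure (by simp))
      (Submonoid.subset_closure (by simp))) r) n
  -- structure of powers of h₁
  have hpow1 : ∀ a : ℕ, ∃ D : Matrix (Fin t) (Fin t) F,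
      h₁ ^ a = Matrix.fromBlocks (C ^ a) D 0 (α ^ a • 1) ∧ D ∈ Algebra.adjoin F {C} ∧
        (C - α • 1) * D = C ^ a - α ^ a • 1 := by
    intro a
    induction a with
    | zero => exact ⟨0, by simp [Matrix.fromBlocks_one], zero_mem _, by simp⟩
    | succ a ih =>
      obtain ⟨D, hD, hDmem, hDeq⟩ := ih
      refine ⟨C ^ a + α • D, ?_, ?_, ?_⟩
      · rw [pow_succ, hD, hh₁, Matrix.fromBlocks_multiply]
        congr 1 <;> simp [Matrix.mul_smul, Matrix.smul_mul, pow_succ, smul_smul, mul_comm]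
      · exact add_mem (pow_mem (Algebra.self_mem_adjoin_singleton F C) a)
          ((Algebra.adjoin F {C}).smul_mem hDmem α)
      · rw [mul_add, mul_smul_comm, hDeq, sub_mul, smul_mul_assoc, one_mul, smul_sub,
          smul_smul]
        rw [← pow_succ', ← pow_succ']
        abel
  -- structure of powers of h₂
  have hpow2 : ∀ b : ℕ, ∃ E : Matrix (Fin t) (Fin t) F,
      h₂ ^ b = Matrix.fromBlocks (α ^ b • 1) E 0 (C ^ b) ∧ E ∈ Algebra.adjoin F {C} ∧
        (C - α • 1) * E = α ^ b • 1 - C ^ b := by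
    intro b
    induction b with
    | zero => exact ⟨0, by simp [Matrix.fromBlocks_one], zero_mem _, by simp⟩
    | succ b ih =>
      obtain ⟨E, hE, hEmem, hEeq⟩ := ih
      refine ⟨E * C - α ^ b • 1, ?_, ?_, ?_⟩
      · rw [pow_succ, hE, hh₂, Matrix.fromBlocks_multiply]
        congr 1
        all_goals
          simp [Matrix.smul_mul, Matrix.mul_smul, smul_smul, pow_succ, mul_comm,
            Matrix.mul_neg, sub_eq_add_neg, add_comm]
      · exact sub_mem (mul_mem hEmem (Algebra.self_mem_adjoin_singleton F C))
          ((Algebra.adjoin F {C}).smul_mem (one_mem _) (α ^ b))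
      · have hCE : (C - α • 1) * (E * C) = ((C - α • 1) * E) * C := by
          rw [mul_assoc]
        rw [mul_sub, hCE, hEeq, sub_mul, smul_mul_assoc, one_mul, mul_smul_comm,
          sub_mul, smul_mul_assoc, one_mul, mul_one, smul_sub, smul_smul]
        rw [← pow_succ, ← pow_succ]
        abel
  -- representation of closure elements
  have hrep : ∀ A ∈ Submonoid.closure {h₁, h₂}, ∃ a b : ℕ, A = h₁ ^ a * h₂ ^ b := by
    intro A hA
    induction hA using Submonoid.closure_induction with
    | mem x hx =>
      rcases hx with rfl | rfl
      · exact ⟨1, 0, by simp⟩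
      · exact ⟨0, 1, by simp⟩
    | one => exact ⟨0, 0, by simp⟩
    | mul x y hx hy ihx ihy =>
      obtain ⟨a, b, rfl⟩ := ihx
      obtain ⟨c, d, rfl⟩ := ihy
      refine ⟨a + c, b + d, ?_⟩
      rw [pow_add, pow_add, mul_assoc, ← mul_assoc (h₂ ^ b), (hcomm.symm.pow_pow b c).eq,
        mul_assoc, mul_assoc]
  -- the unit α generates all nonzero elements
  have hgen : ∀ c : F, c ≠ 0 → ∃ m : ℕ, α ^ m = c := by
    intro c hc
    have hcard : Nat.card Fˣ = q ^ k - 1 := by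
      rw [Nat.card_units, Nat.card_eq_fintype_card, hF]
    set αu : Fˣ := Units.mk0 α hα0 with hαu
    have hαord : orderOf αu = q ^ k - 1 := by
      rw [← orderOf_units]; exact hα
    have htop : Subgroup.zpowers αu = ⊤ := by
      apply Subgroup.eq_top_of_card_eq
      rw [Nat.card_zpowers, hαord, hcard]
    have hmem : Units.mk0 c hc ∈ Submonoid.powers αu := by
      rw [mem_powers_iff_mem_zpowers, htop]; trivial
    obtain ⟨m, hm⟩ := hmem
    have hm' : αu ^ m = Units.mk0 c hc := hm
    exact ⟨m, by simpa [hαu] using congrArg Units.val hm'⟩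
  -- the stabilizer condition
  have hmain : {A | A ∈ Submonoid.closure {h₁, h₂} ∧
        Submodule.span F {Matrix.vecMul (Pi.single (Sum.inl i) (1 : F)) A}
          = Submodule.span F {Pi.single (Sum.inl i) (1 : F)}}
      = (Submonoid.powers ((h₁ * h₂) ^ r)
          : Set (Matrix (Fin t ⊕ Fin t) (Fin t ⊕ Fin t) F)) := by
    rw [hE2]  -- note: rw inside coe works since coe is injective? try
    ext A
    simp only [Set.mem_setOf_eq, SetLike.mem_coe]
    constructor
    · rintro ⟨hAcl, hspan⟩
      obtain ⟨a, b, rfl⟩ := hrep A hAcl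
      obtain ⟨D, hD, hDmem, hDeq⟩ := hpow1 a
      obtain ⟨E, hE, hEmem, hEeq⟩ := hpow2 b
      set X : Matrix (Fin t) (Fin t) F := C ^ a * E + D * C ^ b with hX
      have hAform : h₁ ^ a * h₂ ^ b
          = Matrix.fromBlocks (α ^ b • C ^ a) X 0 (α ^ a • C ^ b) := by
        rw [hD, hE, Matrix.fromBlocks_multiply]
        congr 1 <;> simp [Matrix.mul_smul, Matrix.smul_mul, hX]
      rw [Matrix.single_one_vecMul] at hspan
      -- extract the coefficient
      have h1 : (h₁ ^ a * h₂ ^ b) (Sum.inl i)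
          ∈ Submodule.span F {Pi.single (Sum.inl i) (1 : F)} := by
        rw [← hspan]; exact Submodule.mem_span_singleton_self _
      obtain ⟨c, hc⟩ := Submodule.mem_span_singleton.mp h1
      have h2 : Pi.single (Sum.inl i) (1 : F)
          ∈ Submodule.span F {(h₁ ^ a * h₂ ^ b) (Sum.inl i)} := by
        change Pi.single (Sum.inl i) (1 : F)
          ∈ Submodule.span F {(h₁ ^ a * h₂ ^ b).row (Sum.inl i)}
        rw [hspan]; exact Submodule.mem_span_singleton_self _
      obtain ⟨c', hc'⟩ := Submodule.mem_span_singleton.mp h2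
      have hc0 : c ≠ 0 := by
        intro h
        rw [← hc, h, zero_smul, smul_zero] at hc'
        have := congrFun hc' (Sum.inl i)
        simp at this
      -- row conditions
      have hrow : ∀ j, (h₁ ^ a * h₂ ^ b) (Sum.inl i) j
          = c * (Pi.single (Sum.inl i) (1 : F) : (Fin t ⊕ Fin t) → F) j := by
        intro j
        rw [← hc]
        simp
      have hBzero : α ^ b • C ^ a - c • (1 : Matrix (Fin t) (Fin t) F) = 0 := by
        apply aux_row_zero (hfield _ ?_) i
        · intro j
          have := hrow (Sum.inl j)
          rw [hAform] at this
          simp only [Matrix.fromBlocks_apply₁₁] at this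
          rw [Matrix.sub_apply, this]
          simp only [Matrix.smul_apply, Matrix.one_apply, smul_eq_mul, Pi.single_apply]
          by_cases h : j = i
          · subst h; simp
          · simp [h, Ne.symm h, Sum.inl.injEq]
        · exact sub_mem ((Algebra.adjoin F {C}).smul_mem
            (pow_mem (Algebra.self_mem_adjoin_singleton F C) a) (α ^ b))
            ((Algebra.adjoin F {C}).smul_mem (one_mem _) c)
      have hXzero : X = 0 := by
        apply aux_row_zero (hfield _ ?_) i
        · intro j
          have := hrow (Sum.inr j)
          rw [hAform] at this
          simp only [Matrix.fromBlocks_apply₁₂] at this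
          rw [this]
          simp [Pi.single_apply]
        · exact add_mem (mul_mem (pow_mem (Algebra.self_mem_adjoin_singleton F C) a) hEmem)
            (mul_mem hDmem (pow_mem (Algebra.self_mem_adjoin_singleton F C) b))
      have hB : α ^ b • C ^ a = c • (1 : Matrix (Fin t) (Fin t) F) := by
        rw [← sub_eq_zero]; exact hBzero
      -- key identity
      have hkey : (C - α • 1) * X = α ^ b • C ^ a - α ^ a • C ^ b := by
        have hcomm' : (C - α • 1) * C ^ a = C ^ a * (C - α • 1) :=
          (((Commute.refl C).pow_right a).sub_left
            (((Commute.one_left (C ^ a)).smul_left α))).eq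
        calc (C - α • 1) * X
            = C ^ a * ((C - α • 1) * E) + ((C - α • 1) * D) * C ^ b := by
              rw [hX, mul_add]
              congr 1
              · rw [← mul_assoc, hcomm', mul_assoc]
              · rw [← mul_assoc]
          _ = C ^ a * (α ^ b • 1 - C ^ b) + (C ^ a - α ^ a • 1) * C ^ b := by
              rw [hEeq, hDeq]
          _ = (α ^ b • C ^ a - C ^ a * C ^ b) + (C ^ a * C ^ b - α ^ a • C ^ b) := by
              rw [mul_sub, mul_smul_comm, mul_one, sub_mul, smul_mul_assoc, one_mul]
          _ = α ^ b • C ^ a - α ^ a • C ^ b := by abel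
      have hB2 : α ^ a • C ^ b = c • (1 : Matrix (Fin t) (Fin t) F) := by
        have h0 : α ^ b • C ^ a - α ^ a • C ^ b = 0 := by
          rw [← hkey, hXzero, mul_zero]
        rw [← sub_eq_zero.mp h0, hB]
      have hAscalar : h₁ ^ a * h₂ ^ b = c • (1 : Matrix (Fin t ⊕ Fin t) (Fin t ⊕ Fin t) F) := by
        rw [hAform, hXzero, hB, hB2, aux_fromBlocks_smul_one]
      obtain ⟨m, hm⟩ := hgen c hc0
      refine ⟨m, ?_⟩
      show (α • 1) ^ m = _
      rw [smul_pow, one_pow, hm, ← hAscalar]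
    · rintro ⟨m, hm⟩
      have hm' : (α • (1 : Matrix (Fin t ⊕ Fin t) (Fin t ⊕ Fin t) F)) ^ m = A := hm
      constructor
      · rw [← hm']; exact pow_mem hα1mem m
      · rw [← hm', smul_pow, one_pow, Matrix.single_one_vecMul]
        have : (α ^ m • (1 : Matrix (Fin t ⊕ Fin t) (Fin t ⊕ Fin t) F)) (Sum.inl i)
            = α ^ m • (Pi.single (Sum.inl i) 1 : (Fin t ⊕ Fin t) → F) := by
          ext j
          simp [Matrix.one_apply, Pi.single_apply, eq_comm]
        change Submodule.span F {(α ^ m • (1 : Matrix (Fin t ⊕ Fin t) (Fin t ⊕ Fin t) F)) (Sum.inl i)} = _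
        rw [this]
        exact Submodule.span_singleton_smul_eq (IsUnit.pow m (Ne.isUnit hα0)) _
  refine ⟨hmain, hE2, ?_⟩
  rw [hE2]
  have hc1 : Nat.card (Submonoid.powers (α • (1 : Matrix (Fin t ⊕ Fin t) (Fin t ⊕ Fin t) F)))
      = Nat.card (Submonoid.powers α) := by
    rw [← hsc α, ← Submonoid.map_powers]
    exact (Nat.card_congr (Submonoid.equivMapOfInjective _ _ hinj).toEquiv).symm
  have hc2 : Nat.card (Submonoid.powers α) = Nat.card (Submonoid.powers (Units.mk0 α hα0)) := by
    have e : (Submonoid.powers (Units.mk0 α hα0)).map (Units.coeHom F) = Submonoid.powers α :=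
      Submonoid.map_powers _ _
    rw [← e]
    exact (Nat.card_congr (Submonoid.equivMapOfInjective _ _ Units.val_injective).toEquiv).symm
  rw [hc1, hc2, Nat.card_submonoidPowers, ← orderOf_units, Units.val_mk0]
  exact hα
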